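/- arXiv:1403.4059 — 2 statements merged into one kernel-verified Lean document; each statement's English description precedes it below -/
import Mathlib

section
/- Let D ⊆ ℂ² be a quasi-circular domain with weight (m₁,m₂), i.e. a bounded domain containing the origin invariant under (z₁,z₂) ↦ (e^{i m₁ θ} z₁, e^{i m₂ θ} z₂) for all θ ∈ ℝ, where m₁, m₂ are positive integers, and let K : D × D → ℂ be the Bergman kernel of D. Then z ↦ K(z,0) is constant on D and K(z,0) = K(0,0) ≠ 0 for all z ∈ D. -/
open MeasureTheory

/-- The complex Jacobian matrix of a map `φ : ℂⁿ → ℂⁿ` at a point `p`. -/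
noncomputable def jacMatrix {n : ℕ} (φ : (Fin n → ℂ) → (Fin n → ℂ)) (p : Fin n → ℂ) :
    Matrix (Fin n) (Fin n) ℂ :=
  Matrix.of fun i j => fderiv ℂ (fun z => φ z i) p (Pi.single j 1)

/-- `f` is a biholomorphism from `D` onto `D'`. -/
def IsBiholomorphicMap {n : ℕ} (D D' : Set (Fin n → ℂ))
    (f : (Fin n → ℂ) → (Fin n → ℂ)) : Prop :=
  DifferentiableOn ℂ f D ∧ Set.BijOn f D D' ∧
    ∃ g, DifferentiableOn ℂ g D' ∧ (∀ z ∈ D, g (f z) = z) ∧ (∀ w ∈ D', f (g w) = w)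

/-- `K` is the Bergman kernel of the bounded domain `D ⊆ ℂⁿ`. -/
def IsBergmanKernel {n : ℕ} (D : Set (Fin n → ℂ))
    (K : (Fin n → ℂ) → (Fin n → ℂ) → ℂ) : Prop :=
  (∀ w ∈ D, DifferentiableOn ℂ (fun z => K z w) D ∧
      IntegrableOn (fun z => ‖K z w‖ ^ 2) D) ∧
  (∀ z ∈ D, ∀ w ∈ D, K z w = starRingEnd ℂ (K w z)) ∧
  (∀ f : (Fin n → ℂ) → ℂ, DifferentiableOn ℂ f D →
      IntegrableOn (fun z => ‖f z‖ ^ 2) D →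
      ∀ z ∈ D, f z = ∫ w in D, f w * K z w)

/-- Holomorphic derivative `∂_{z_j} K(z,w)` of the Bergman kernel in its first variable. -/
noncomputable def Dz {n : ℕ} (K : (Fin n → ℂ) → (Fin n → ℂ) → ℂ) (j : Fin n)
    (z w : Fin n → ℂ) : ℂ :=
  fderiv ℂ (fun z' => K z' w) z (Pi.single j 1)

/-- Anti-holomorphic (Wirtinger) derivative `∂_{w̄ᵢ} K(z,w)` of the Bergman kernel in its
second variable. -/
noncomputable def Dwbar {n : ℕ} (K : (Fin n → ℂ) → (Fin n → ℂ) → ℂ) (i : Fin n)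
    (z w : Fin n → ℂ) : ℂ :=
  starRingEnd ℂ (fderiv ℂ (fun w' => starRingEnd ℂ (K z w')) w (Pi.single i 1))

/-- The matrix `T_D(z,w)` with entries `∂²/∂w̄ᵢ∂z_j log K(z,w)
  = [K ∂_{w̄ᵢ}∂_{z_j}K − ∂_{z_j}K ∂_{w̄ᵢ}K]/K²`. -/
noncomputable def bergmanT {n : ℕ} (K : (Fin n → ℂ) → (Fin n → ℂ) → ℂ)
    (z w : Fin n → ℂ) : Matrix (Fin n) (Fin n) ℂ :=
  Matrix.of fun i j =>
    (K z w * Dwbar (fun z' w' => Dz K j z' w') i z w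
      - Dz K j z w * Dwbar K i z w) / (K z w) ^ 2

/-- `D ⊆ ℂ²` is a bounded domain containing the origin, invariant under
`(z₁,z₂) ↦ (e^{i m₁ θ} z₁, e^{i m₂ θ} z₂)` with positive integer weight `(m₁, m₂)`. -/
def IsQuasiCircular (D : Set (Fin 2 → ℂ)) (m₁ m₂ : ℕ) : Prop :=
  IsOpen D ∧ IsConnected D ∧ Bornology.IsBounded D ∧ (0 : Fin 2 → ℂ) ∈ D ∧
  0 < m₁ ∧ 0 < m₂ ∧
  ∀ θ : ℝ, ∀ z ∈ D,
    (![Complex.exp ((((m₁ : ℝ) * θ : ℝ) : ℂ) * Complex.I) * z 0,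
       Complex.exp ((((m₂ : ℝ) * θ : ℝ) : ℂ) * Complex.I) * z 1] : Fin 2 → ℂ) ∈ D

/-- A normal quasi-circular domain: weight normalized so `m₁ ≤ m₂`, `gcd(m₁,m₂)=1`, `m₁ ≥ 2`. -/
def IsNormalQuasiCircular (D : Set (Fin 2 → ℂ)) : Prop :=
  ∃ m₁ m₂ : ℕ, 2 ≤ m₁ ∧ m₁ ≤ m₂ ∧ Nat.gcd m₁ m₂ = 1 ∧ IsQuasiCircular D m₁ m₂


section QCHelpers

open Metric Complex

private lemma qc_transfer_int {D : Set (Fin 2 → ℂ)} {F : (Fin 2 → ℂ) → ℝ}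
    {φ : (Fin 2 → ℂ) → (Fin 2 → ℂ)}
    (hmp : MeasurePreserving φ volume volume) (hemb : MeasurableEmbedding φ)
    (himg : φ '' D = D) (h : IntegrableOn F D) :
    IntegrableOn (fun z => F (φ z)) D := by
  rw [← himg] at h
  exact (hmp.integrableOn_image hemb).mp h

private lemma qc_transfer_int' {D : Set (Fin 2 → ℂ)} {F : (Fin 2 → ℂ) → ℝ}
    {φ : (Fin 2 → ℂ) → (Fin 2 → ℂ)}
    (hmp : MeasurePreserving φ volume volume) (hemb : MeasurableEmbedding φ)
    (himg : φ '' D = D) (h : IntegrableOn (fun z => F (φ z)) D) :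
    IntegrableOn F D := by
  rw [← himg]
  exact (hmp.integrableOn_image hemb).mpr h

private lemma qc_transfer_integral {D : Set (Fin 2 → ℂ)} (F : (Fin 2 → ℂ) → ℂ)
    {φ : (Fin 2 → ℂ) → (Fin 2 → ℂ)}
    (hmp : MeasurePreserving φ volume volume) (hemb : MeasurableEmbedding φ)
    (himg : φ '' D = D) :
    ∫ u in D, F u = ∫ w in D, F (φ w) := by
  conv_lhs => rw [← himg]
  exact hmp.setIntegral_image_emb hemb F D

private lemma qc_mp_mul (c : Fin 2 → ℂ) (hc : ∀ i, ‖c i‖ = 1) :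
    MeasurePreserving (fun z : Fin 2 → ℂ => fun i => c i * z i) volume volume := by
  refine volume_preserving_pi (fun i => ?_)
  have hmem : c i ∈ Submonoid.unitSphere ℂ := by
    simp [Submonoid.unitSphere, mem_sphere_zero_iff_norm, hc i]
  have h := (rotation ⟨c i, hmem⟩).measurePreserving
  have he : ⇑(rotation ⟨c i, hmem⟩) = fun x : ℂ => c i * x := funext fun z => rotation_apply _ z
  rwa [he] at h

private lemma qc_emb_mul (c : Fin 2 → ℂ) (hc : ∀ i, c i ≠ 0) :
    MeasurableEmbedding (fun z : Fin 2 → ℂ => fun i => c i * z i) :=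
  (MeasurableEquiv.piCongrRight
    (fun i => (Homeomorph.mulLeft₀ (c i) (hc i)).toMeasurableEquiv)).measurableEmbedding

private lemma qc_bergman_unique {D : Set (Fin 2 → ℂ)} (hDm : MeasurableSet D)
    {K K' : (Fin 2 → ℂ) → (Fin 2 → ℂ) → ℂ}
    (hK : IsBergmanKernel D K) (hK' : IsBergmanKernel D K')
    {z w : Fin 2 → ℂ} (hz : z ∈ D) (hw : w ∈ D) : K z w = K' z w := by
  obtain ⟨h1, h2, h3⟩ := hK
  obtain ⟨h1', h2', h3'⟩ := hK'
  have e1 : K' w z = ∫ u in D, K' u z * K w u :=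
    h3 (fun u => K' u z) (h1' z hz).1 (h1' z hz).2 w hw
  have e2 : K z w = ∫ u in D, K u w * K' z u :=
    h3' (fun u => K u w) (h1 w hw).1 (h1 w hw).2 z hz
  have key : K' z w = ∫ u in D, K u w * K' z u := by
    calc K' z w = starRingEnd ℂ (K' w z) := h2' z hz w hw
      _ = starRingEnd ℂ (∫ u in D, K' u z * K w u) := by rw [e1]
      _ = ∫ u in D, starRingEnd ℂ (K' u z * K w u) := (integral_conj).symm
      _ = ∫ u in D, K u w * K' z u := by
          refine setIntegral_congr_fun hDm (fun u hu => ?_)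
          simp only [map_mul]
          rw [← h2' z hz u hu, ← h2 u hu w hw, mul_comm]
  rw [e2, key]

private lemma qc_bergman_pullback {D : Set (Fin 2 → ℂ)}
    {K : (Fin 2 → ℂ) → (Fin 2 → ℂ) → ℂ} (hK : IsBergmanKernel D K)
    (φ ψ : (Fin 2 → ℂ) → (Fin 2 → ℂ))
    (hφd : Differentiable ℂ φ) (hψd : Differentiable ℂ ψ)
    (hinv : ∀ z, ψ (φ z) = z)
    (hmp : MeasurePreserving φ volume volume) (hemb : MeasurableEmbedding φ)
    (himg : φ '' D = D) : IsBergmanKernel D (fun z w => K (φ z) (φ w)) := by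
  obtain ⟨h1, h2, h3⟩ := hK
  have hmem : ∀ z ∈ D, φ z ∈ D := fun z hz => by
    rw [← himg]; exact Set.mem_image_of_mem φ hz
  have hmemψ : ∀ z ∈ D, ψ z ∈ D := by
    intro z hz
    rw [← himg] at hz
    obtain ⟨u, hu, rfl⟩ := hz
    rw [hinv]; exact hu
  refine ⟨fun w hw => ⟨?_, ?_⟩, fun z hz w hw => h2 _ (hmem z hz) _ (hmem w hw), ?_⟩
  · exact (h1 (φ w) (hmem w hw)).1.comp hφd.differentiableOn (fun z hz => hmem z hz)
  · exact qc_transfer_int (F := fun z => ‖K z (φ w)‖ ^ 2) hmp hemb himg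
      (h1 (φ w) (hmem w hw)).2
  · intro f hf hfi z hz
    show f z = ∫ w in D, f w * K (φ z) (φ w)
    have hgd : DifferentiableOn ℂ (fun u => f (ψ u)) D :=
      hf.comp hψd.differentiableOn hmemψ
    have hgi : IntegrableOn (fun u => ‖f (ψ u)‖ ^ 2) D := by
      refine qc_transfer_int' (F := fun u => ‖f (ψ u)‖ ^ 2) hmp hemb himg ?_
      simpa only [hinv] using hfi
    calc f z = f (ψ (φ z)) := by rw [hinv]
      _ = ∫ u in D, f (ψ u) * K (φ z) u := h3 (fun u => f (ψ u)) hgd hgi (φ z) (hmem z hz)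
      _ = ∫ w in D, f (ψ (φ w)) * K (φ z) (φ w) :=
          qc_transfer_integral (fun u => f (ψ u) * K (φ z) u) hmp hemb himg
      _ = ∫ w in D, f w * K (φ z) (φ w) := by simp only [hinv]

private lemma qc_slice {D : Set (Fin 2 → ℂ)} {g : (Fin 2 → ℂ) → ℂ}
    (hg : DifferentiableOn ℂ g D)
    {c : ℂ} {z w : Fin 2 → ℂ} {r : ℝ} (hball : Metric.ball z r ⊆ D)
    (hwz : dist w z < r / 4) (hw : ∀ᶠ v in nhds w, g v = c) :
    ∀ u ∈ Metric.ball z (r / 4), g u = c := by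
  intro u hu
  have hr : 0 < r := by nlinarith [dist_nonneg (x := w) (y := z)]
  set L : ℂ → (Fin 2 → ℂ) := fun t => w + t • (u - w) with hL
  have hLd : Differentiable ℂ L := by fun_prop
  have huw : dist u w < r / 2 := by
    have := dist_triangle u z w
    have h1 : dist u z < r / 4 := mem_ball.mp hu
    have h2 : dist z w < r / 4 := by rwa [dist_comm]
    linarith
  have hmaps : ∀ t ∈ Metric.ball (0 : ℂ) (3 / 2), L t ∈ D := by
    intro t ht
    apply hball
    have h1 : dist (L t) w = ‖t‖ * ‖u - w‖ := by
      simp [hL, dist_eq_norm, norm_smul]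
    have h2 : ‖t‖ < 3 / 2 := mem_ball_zero_iff.mp ht
    have h3 : ‖u - w‖ < r / 2 := by rwa [← dist_eq_norm]
    have h4 : dist (L t) z ≤ dist (L t) w + dist w z := dist_triangle _ _ _
    have h5 : ‖t‖ * ‖u - w‖ ≤ (3 / 2) * ‖u - w‖ :=
      mul_le_mul_of_nonneg_right h2.le (norm_nonneg _)
    rw [Metric.mem_ball]
    have h6 : (3 / 2 : ℝ) * ‖u - w‖ < (3 / 2) * (r / 2) := by
      nlinarith [norm_nonneg (u - w)]
    nlinarith
  have hdOn : DifferentiableOn ℂ (g ∘ L) (Metric.ball 0 (3 / 2)) :=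
    hg.comp hLd.differentiableOn hmaps
  have ha : AnalyticOnNhd ℂ (g ∘ L) (Metric.ball 0 (3 / 2)) :=
    hdOn.analyticOnNhd Metric.isOpen_ball
  have hev : (g ∘ L) =ᶠ[nhds 0] (fun _ => c) := by
    have hc : Filter.Tendsto L (nhds 0) (nhds w) := by
      have h0 : L 0 = w := by simp [hL]
      have h1 : Filter.Tendsto L (nhds 0) (nhds (L 0)) := hLd.continuous.continuousAt
      rwa [h0] at h1
    exact hc.eventually hw
  have heq := ha.eqOn_of_preconnected_of_eventuallyEq (analyticOnNhd_const)
    (convex_ball (0:ℂ) (3/2)).isPreconnected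
    (Metric.mem_ball_self (by norm_num)) hev
  have h1 : (1 : ℂ) ∈ Metric.ball (0 : ℂ) (3 / 2) := by
    rw [mem_ball_zero_iff]; norm_num
  simpa [hL] using heq h1

end QCHelpers

/-- For a quasi-circular domain `D ⊆ ℂ²`, the Bergman kernel satisfies
`K(z,0) = K(0,0) ≠ 0` for all `z ∈ D`. -/
theorem quasiCircular_bergmanKernel_at_zero_const
    (D : Set (Fin 2 → ℂ)) (m₁ m₂ : ℕ) (hD : IsQuasiCircular D m₁ m₂)
    (K : (Fin 2 → ℂ) → (Fin 2 → ℂ) → ℂ) (hK : IsBergmanKernel D K) :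
    K 0 0 ≠ 0 ∧ ∀ z ∈ D, K z 0 = K 0 0 := by
  obtain ⟨hDo, hDconn, hDb, hD0, hm1, hm2, hQC⟩ := hD
  have hDm : MeasurableSet D := hDo.measurableSet
  set m : Fin 2 → ℕ := ![m₁, m₂] with hmdef
  set c : ℝ → Fin 2 → ℂ := fun θ i => Complex.exp ((((m i : ℝ) * θ : ℝ) : ℂ) * Complex.I)
    with hc
  set φ : ℝ → (Fin 2 → ℂ) → (Fin 2 → ℂ) := fun θ z i => c θ i * z i with hφ
  have habs : ∀ θ i, ‖c θ i‖ = 1 := by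
    intro θ i
    simp [hc, Complex.norm_exp]
  have hne : ∀ θ i, c θ i ≠ 0 := by
    intro θ i; simp [hc, Complex.exp_ne_zero]
  have hmulc : ∀ θ₁ θ₂ i, c θ₁ i * c θ₂ i = c (θ₁ + θ₂) i := by
    intro θ₁ θ₂ i
    rw [hc]
    simp only [← Complex.exp_add]
    congr 1
    push_cast
    ring
  have hc0 : ∀ i, c 0 i = 1 := by
    intro i; simp [hc]
  have hinvφ : ∀ θ z, φ (-θ) (φ θ z) = z := by
    intro θ z; funext i
    show c (-θ) i * (c θ i * z i) = z i
    rw [← mul_assoc, hmulc]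
    simp [hc0]
  have hφd : ∀ θ, Differentiable ℂ (φ θ) := by
    intro θ
    show Differentiable ℂ (fun z : Fin 2 → ℂ => fun i => c θ i * z i)
    fun_prop
  have hmapsD : ∀ θ, ∀ z ∈ D, φ θ z ∈ D := by
    intro θ z hz
    have h := hQC θ z hz
    have he : φ θ z = ![Complex.exp ((((m₁ : ℝ) * θ : ℝ) : ℂ) * Complex.I) * z 0,
        Complex.exp ((((m₂ : ℝ) * θ : ℝ) : ℂ) * Complex.I) * z 1] := by
      funext i; fin_cases i <;> simp [hφ, hc, hmdef]
    rwa [he]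
  have himg : ∀ θ, φ θ '' D = D := by
    intro θ
    apply Set.Subset.antisymm
    · rintro _ ⟨u, hu, rfl⟩; exact hmapsD θ u hu
    · intro z hz
      refine ⟨φ (-θ) z, hmapsD (-θ) z hz, ?_⟩
      have := hinvφ (-θ) z
      rwa [neg_neg] at this
  have hker : ∀ θ, IsBergmanKernel D (fun z w => K (φ θ z) (φ θ w)) := fun θ =>
    qc_bergman_pullback hK (φ θ) (φ (-θ)) (hφd θ) (hφd (-θ)) (hinvφ θ)
      (qc_mp_mul (c θ) (habs θ)) (qc_emb_mul (c θ) (hne θ)) (himg θ)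
  have hφ0 : ∀ θ, φ θ 0 = 0 := by
    intro θ; funext i
    show c θ i * (0 : Fin 2 → ℂ) i = 0
    simp
  have hInv : ∀ θ : ℝ, ∀ z ∈ D, K (φ θ z) 0 = K z 0 := by
    intro θ z hz
    have h := qc_bergman_unique hDm hK (hker θ) hz hD0
    rw [hφ0 θ] at h
    exact h.symm
  obtain ⟨ε, hε, hball⟩ := Metric.isOpen_iff.mp hDo 0 hD0
  have hloc : ∀ z ∈ Metric.ball (0 : Fin 2 → ℂ) ε, K z 0 = K 0 0 := by
    intro z hz
    have hzD : z ∈ D := hball hz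
    have hznorm : ‖z‖ < ε := by rwa [Metric.mem_ball, dist_zero_right] at hz
    set v : ℂ → (Fin 2 → ℂ) := fun t => ![t ^ m₁ * z 0, t ^ m₂ * z 1] with hv
    have hvd : Differentiable ℂ v := by
      rw [differentiable_pi]
      intro i
      fin_cases i <;>
        simpa [hv] using (differentiable_pow _).mul_const _
    have hvmem : ∀ t : ℂ, ‖t‖ ≤ 1 → v t ∈ Metric.ball (0 : Fin 2 → ℂ) ε := by
      intro t ht
      rw [Metric.mem_ball, dist_zero_right, pi_norm_lt_iff hε]
      intro i
      have hb : ∀ k : ℕ, ∀ j : Fin 2, ‖t ^ k * z j‖ < ε := by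
        intro k j
        rw [norm_mul, norm_pow]
        calc ‖t‖ ^ k * ‖z j‖ ≤ 1 * ‖z j‖ := by
              refine mul_le_mul_of_nonneg_right ?_ (norm_nonneg _)
              exact pow_le_one₀ (norm_nonneg t) ht
          _ = ‖z j‖ := one_mul _
          _ ≤ ‖z‖ := norm_le_pi_norm z j
          _ < ε := hznorm
      fin_cases i <;> simpa [hv] using hb _ _
    have hvD : ∀ t : ℂ, ‖t‖ ≤ 1 → v t ∈ D := fun t ht => hball (hvmem t ht)
    set F : ℂ → ℂ := fun t => K (v t) 0 - K z 0 with hF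
    have hdc : DiffContOnCl ℂ F (Metric.ball 0 1) := by
      have hd1 : DifferentiableOn ℂ (fun t => K (v t) 0) (Metric.ball (0:ℂ) 1) :=
        (hK.1 0 hD0).1.comp hvd.differentiableOn
          (fun t ht => hvD t (le_of_lt (mem_ball_zero_iff.mp ht)))
      have hc1 : ContinuousOn (fun t => K (v t) 0) (Metric.closedBall (0:ℂ) 1) :=
        ((hK.1 0 hD0).1.continuousOn.comp hvd.continuous.continuousOn
          (fun t ht => hvD t (mem_closedBall_zero_iff.mp ht)))
      refine DiffContOnCl.sub ⟨hd1, ?_⟩ (differentiable_const (K z 0)).diffContOnCl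
      rwa [closure_ball (0:ℂ) one_ne_zero]
    have hfront : ∀ t ∈ frontier (Metric.ball (0:ℂ) 1), ‖F t‖ ≤ 0 := by
      intro t ht
      rw [frontier_ball (0:ℂ) one_ne_zero, mem_sphere_zero_iff_norm] at ht
      set θ := Complex.arg t with hθ
      have hexp : Complex.exp ((θ : ℂ) * Complex.I) = t := by
        have := Complex.norm_mul_exp_arg_mul_I t
        rwa [show ‖t‖ = 1 from ht, Complex.ofReal_one,
          one_mul] at this
      have hcomp : ∀ k : ℕ, t ^ k = Complex.exp ((((k : ℝ) * θ : ℝ) : ℂ) * Complex.I) := by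
        intro k
        rw [← hexp, ← Complex.exp_nat_mul]
        congr 1
        push_cast
        ring
      have hveq : v t = φ θ z := by
        funext i
        fin_cases i <;> simp [hv, hφ, hc, hmdef, hcomp]
      have : F t = 0 := by
        rw [hF]
        simp only [hveq, hInv θ z hzD, sub_self]
      simp [this]
    have h0 := Complex.norm_le_of_forall_mem_frontier_norm_le Metric.isBounded_ball hdc hfront
      (subset_closure (Metric.mem_ball_self one_pos))
    have hv0 : v 0 = 0 := by
      funext i
      fin_cases i <;>
        simp [hv, zero_pow hm1.ne', zero_pow hm2.ne']
    have : F 0 = 0 := by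
      rwa [norm_le_zero_iff] at h0
    rw [hF] at this
    simp only [hv0] at this
    exact (sub_eq_zero.mp this).symm
  set U : Set (Fin 2 → ℂ) := {x | ∀ᶠ y in nhds x, y ∈ D → K y 0 = K 0 0} with hU
  have hUo : IsOpen U := isOpen_setOf_eventually_nhds
  have hU0 : (0 : Fin 2 → ℂ) ∈ U := by
    rw [hU, Set.mem_setOf_eq]
    exact Filter.eventually_iff_exists_mem.mpr ⟨Metric.ball 0 ε,
      Metric.isOpen_ball.mem_nhds (Metric.mem_ball_self hε), fun y hy _ => hloc y hy⟩
  have hKd : DifferentiableOn ℂ (fun y => K y 0) D := (hK.1 0 hD0).1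
  have hVo : IsOpen {x | x ∈ D ∧ x ∉ U} := by
    rw [Metric.isOpen_iff]
    rintro x ⟨hxD, hxU⟩
    obtain ⟨r, hr, hbr⟩ := Metric.isOpen_iff.mp hDo x hxD
    refine ⟨r / 4, by linarith, ?_⟩
    rintro y hy
    have hyD : y ∈ D := hbr (Metric.ball_subset_ball (by linarith) hy)
    refine ⟨hyD, fun hyU => hxU ?_⟩
    have hyU' : ∀ᶠ v in nhds y, v ∈ D → K v 0 = K 0 0 := hyU
    have hev : ∀ᶠ v in nhds y, K v 0 = K 0 0 := by
      have h1 : ∀ᶠ v in nhds y, v ∈ D := hDo.eventually_mem hyD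
      exact (hyU'.and h1).mono (fun v hv => hv.1 hv.2)
    have hsl := qc_slice hKd hbr (Metric.mem_ball.mp hy) hev
    rw [hU, Set.mem_setOf_eq]
    exact Filter.eventually_iff_exists_mem.mpr ⟨Metric.ball x (r / 4),
      Metric.isOpen_ball.mem_nhds (Metric.mem_ball_self (by linarith)),
      fun u hu _ => hsl u hu⟩
  have hconst : ∀ z ∈ D, K z 0 = K 0 0 := by
    have hsub : D ⊆ U := by
      have hdisj : Disjoint U {x | x ∈ D ∧ x ∉ U} := by
        rw [Set.disjoint_left]
        rintro a haU ⟨-, haU'⟩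
        exact haU' haU
      have hcover : D ⊆ U ∪ {x | x ∈ D ∧ x ∉ U} := by
        intro x hx
        by_cases h : x ∈ U
        · exact Or.inl h
        · exact Or.inr ⟨hx, h⟩
      exact IsPreconnected.subset_left_of_subset_union hUo hVo hdisj hcover
        ⟨0, hD0, hU0⟩ hDconn.isPreconnected
    intro z hz
    have hzU : ∀ᶠ y in nhds z, y ∈ D → K y 0 = K 0 0 := hsub hz
    exact hzU.self_of_nhds hz
  have hint1 : IntegrableOn (fun _ : Fin 2 → ℂ => ‖(1 : ℂ)‖ ^ 2) D := by
    simpa using ((integrableOn_const_iff (C := (1 : ℝ))).mpr (Or.inr hDb.measure_lt_top) :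
      IntegrableOn (fun _ : Fin 2 → ℂ => (1 : ℝ)) D)
  have hrep := hK.2.2 (fun _ => (1 : ℂ)) (differentiableOn_const 1) hint1 0 hD0
  have hconj : ∫ w in D, (1 : ℂ) * K 0 w = ∫ w in D, starRingEnd ℂ (K 0 0) := by
    refine setIntegral_congr_fun hDm (fun w hw => ?_)
    rw [one_mul, hK.2.1 0 hD0 w hw, hconst w hw]
  have hne0 : K 0 0 ≠ 0 := by
    intro h
    rw [hconj, h] at hrep
    simp at hrep
  exact ⟨hne0, hconst⟩
end

section
/- Let 𝔼 = {(z₁ + z₂, z₁·z₂) : z₁, z₂ ∈ ℂ, |z₁| + |z₂| < 1} ⊆ ℂ² (the symmetrized (1/2,2)-ellipsoid) and let ζ ∈ ℂ with |ζ| = 1. Then the map φ(w₁,w₂) = (ζ·w₁, ζ²·(w₁²/4 − w₂)) is a biholomorphic self-map of 𝔼 with φ(0,0) = (0,0), and φ is not the restriction of a ℂ-linear map. -/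
/-- The symmetrized `(1/2,2)`-ellipsoid `𝔼 = π₂({|z₁| + |z₂| < 1})` where
`π₂(z₁,z₂) = (z₁ + z₂, z₁·z₂)`. -/
def symEllipsoid : Set (ℂ × ℂ) :=
  {w | ∃ z₁ z₂ : ℂ, ‖z₁‖ + ‖z₂‖ < 1 ∧ w = (z₁ + z₂, z₁ * z₂)}

/-- Zapałowski's automorphism `φ(w₁,w₂) = (ζ w₁, ζ²(w₁²/4 − w₂))` of the symmetrized
`(1/2,2)`-ellipsoid, for `|ζ| = 1`. -/
noncomputable def zapAuto (ζ : ℂ) : ℂ × ℂ → ℂ × ℂ :=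
  fun w => (ζ * w.1, ζ ^ 2 * (w.1 ^ 2 / 4 - w.2))

lemma zapAuto_differentiable (ζ : ℂ) : Differentiable ℂ (zapAuto ζ) := by
  unfold zapAuto
  fun_prop

lemma zapAuto_mapsTo {ζ : ℂ} (hζ : ‖ζ‖ = 1) :
    Set.MapsTo (zapAuto ζ) symEllipsoid symEllipsoid := by
  rintro w ⟨z₁, z₂, hlt, rfl⟩
  obtain ⟨p, hp⟩ := IsAlgClosed.exists_pow_nat_eq z₁ (two_pos)
  obtain ⟨q, hq⟩ := IsAlgClosed.exists_pow_nat_eq z₂ (two_pos)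
  refine ⟨ζ * (p + q) ^ 2 / 2, ζ * (p - q) ^ 2 / 2, ?_, ?_⟩
  · have h1 : ‖ζ * (p + q) ^ 2 / 2‖ = ‖p + q‖ ^ 2 / 2 := by
      simp [map_div₀, map_mul, map_pow, hζ]
    have h2 : ‖ζ * (p - q) ^ 2 / 2‖ = ‖p - q‖ ^ 2 / 2 := by
      simp [map_div₀, map_mul, map_pow, hζ]
    have hpar : ‖p + q‖ ^ 2 + ‖p - q‖ ^ 2 =
        2 * ‖p‖ ^ 2 + 2 * ‖q‖ ^ 2 := by
      simp only [Complex.sq_norm, Complex.normSq_apply, Complex.add_re, Complex.add_im,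
        Complex.sub_re, Complex.sub_im]
      ring
    have habs : ‖z₁‖ = ‖p‖ ^ 2 := by rw [← hp, norm_pow]
    have habs' : ‖z₂‖ = ‖q‖ ^ 2 := by rw [← hq, norm_pow]
    rw [h1, h2]
    rw [habs, habs'] at hlt
    linarith
  · have hz : (z₁ - z₂) ^ 2 = (z₁ + z₂) ^ 2 - 4 * (z₁ * z₂) := by ring
    simp only [zapAuto, Prod.mk.injEq]
    constructor
    · rw [← hp, ← hq]; ring
    · rw [← hp, ← hq]; ring

lemma zapAuto_leftInv {ζ : ℂ} (hζ : ζ ≠ 0) (w : ℂ × ℂ) :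
    zapAuto ζ⁻¹ (zapAuto ζ w) = w := by
  obtain ⟨w1, w2⟩ := w
  simp only [zapAuto, Prod.mk.injEq]
  constructor
  · field_simp
  · field_simp
    ring

/-- For each unimodular `ζ`, the map `φ(w₁,w₂) = (ζ w₁, ζ²(w₁²/4 − w₂))` is an
origin-preserving biholomorphic self-map of the symmetrized `(1/2,2)`-ellipsoid which is
not the restriction of any `ℂ`-linear map. -/
theorem zapAuto_is_nonlinear_automorphism (ζ : ℂ) (hζ : ‖ζ‖ = 1) :
    DifferentiableOn ℂ (zapAuto ζ) symEllipsoid ∧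
    Set.BijOn (zapAuto ζ) symEllipsoid symEllipsoid ∧
    (∃ g : ℂ × ℂ → ℂ × ℂ, DifferentiableOn ℂ g symEllipsoid ∧
      (∀ w ∈ symEllipsoid, g (zapAuto ζ w) = w) ∧
      ∀ w ∈ symEllipsoid, zapAuto ζ (g w) = w) ∧
    zapAuto ζ (0, 0) = (0, 0) ∧
    ¬∃ A : ℂ × ℂ →ₗ[ℂ] ℂ × ℂ, ∀ w ∈ symEllipsoid, zapAuto ζ w = A w := by
  have hζ0 : ζ ≠ 0 := by
    intro h; rw [h] at hζ; simp at hζ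
  have hζinv : ‖ζ⁻¹‖ = 1 := by rw [norm_inv, hζ]; norm_num
  have hζinv0 : (ζ⁻¹ : ℂ) ≠ 0 := inv_ne_zero hζ0
  have hLI : ∀ w, zapAuto ζ⁻¹ (zapAuto ζ w) = w := zapAuto_leftInv hζ0
  have hRI : ∀ w, zapAuto ζ (zapAuto ζ⁻¹ w) = w := by
    intro w
    have := zapAuto_leftInv hζinv0 w
    rwa [inv_inv] at this
  refine ⟨(zapAuto_differentiable ζ).differentiableOn, ?_, ?_, ?_, ?_⟩
  · refine ⟨zapAuto_mapsTo hζ, ?_, ?_⟩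
    · exact Function.LeftInverse.injective hLI |>.injOn
    · intro w hw
      exact ⟨zapAuto ζ⁻¹ w, zapAuto_mapsTo hζinv hw, hRI w⟩
  · exact ⟨zapAuto ζ⁻¹, (zapAuto_differentiable ζ⁻¹).differentiableOn,
      fun w _ => hLI w, fun w _ => hRI w⟩
  · simp [zapAuto]
  · rintro ⟨A, hA⟩
    have hmem : ∀ t : ℂ, ‖t‖ < 1 → ((t, 0) : ℂ × ℂ) ∈ symEllipsoid := by
      intro t ht
      exact ⟨t, 0, by simpa using ht, by simp⟩
    have key : ∀ t : ℂ, ‖t‖ < 1 →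
        (ζ * t, ζ ^ 2 * t ^ 2 / 4) = A (t, 0) := by
      intro t ht
      have := hA _ (hmem t ht)
      simpa [zapAuto, mul_div_assoc] using this
    have h1 := key (1/2) (by norm_num)
    have h2 := key (1/4) (by norm_num)
    have hs1 : ((1:ℂ)/2, (0:ℂ)) = ((1:ℂ)/2) • ((1:ℂ), (0:ℂ)) := by
      simp [Prod.smul_mk]
    have hs2 : ((1:ℂ)/4, (0:ℂ)) = ((1:ℂ)/4) • ((1:ℂ), (0:ℂ)) := by
      simp [Prod.smul_mk]
    rw [hs1, map_smul] at h1
    rw [hs2, map_smul] at h2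
    -- second coordinates
    have e1 : ζ ^ 2 * ((1:ℂ)/2) ^ 2 / 4 = ((1:ℂ)/2) * (A (1, 0)).2 := by
      have := congrArg Prod.snd h1; simpa using this
    have e2 : ζ ^ 2 * ((1:ℂ)/4) ^ 2 / 4 = ((1:ℂ)/4) * (A (1, 0)).2 := by
      have := congrArg Prod.snd h2; simpa using this
    have : ζ ^ 2 = 0 := by
      linear_combination (32 : ℂ) * e1 - (64 : ℂ) * e2
    exact hζ0 (pow_eq_zero_iff (by norm_num) |>.mp this)
end
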